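/- Let F : [0,1) → [0,1) be a surjective piecewise affine map with nonzero slopes (not necessarily measure preserving), and define h : [0,1] → [0,1] by h(0) = 0, h(x) = λ(F⁻¹((0,x))) for x ∈ (0,1]. Then G = h ∘ F preserves Lebesgue measure: λ(A) = λ(G⁻¹(A)) for every Borel set A ⊆ [0,1). -/

import Mathlib

open MeasureTheory Set
open scoped ENNReal

namespace Stmt6Aux

noncomputable def hh (ν : Measure ℝ) : ℝ → ℝ := fun x => (ν (Ioo 0 x)).toReal

variable (ν : Measure ℝ) [IsFiniteMeasure ν]

lemma hh_mono : Monotone (hh ν) := fun x y hxy =>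
  ENNReal.toReal_mono (measure_ne_top ν _) (measure_mono (Ioo_subset_Ioo_right hxy))

lemma hh_nonneg (x : ℝ) : 0 ≤ hh ν x := ENNReal.toReal_nonneg

lemma hh_zero : hh ν 0 = 0 := by simp [hh]

lemma hh_def' (x : ℝ) : hh ν x = (ν (Ioo 0 x)).toReal := rfl

lemma ofReal_hh (b : ℝ) : ENNReal.ofReal (hh ν b) = ν (Ioo 0 b) :=
  ENNReal.ofReal_toReal (measure_ne_top ν _)

lemma hadd (hfib : ∀ y : ℝ, ν {y} = 0) :
    ∀ a b : ℝ, 0 ≤ a → a ≤ b → ν (Ioo 0 b) = ν (Ioo 0 a) + ν (Ioo a b) := by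
  intro a b ha hab
  rcases eq_or_lt_of_le hab with rfl | hlt
  · simp
  rcases eq_or_lt_of_le ha with rfl | ha0
  · simp
  · have h1 : Ioo (0:ℝ) a ∪ Ico a b = Ioo 0 b := Ioo_union_Ico_eq_Ioo ha0 hlt.le
    have hd : Disjoint (Ioo (0:ℝ) a) (Ico a b) := by
      rw [Set.disjoint_left]
      rintro x ⟨_, hxa⟩ ⟨hax, _⟩
      exact absurd hax (not_le.mpr hxa)
    have h3 : ν (Ico a b) = ν (Ioo a b) := by
      rw [← Ico_diff_left, measure_diff_null (hfib a)]
    rw [← h1, measure_union hd measurableSet_Ico, h3]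

lemma hh_lt (hfib : ∀ y : ℝ, ν {y} = 0)
    (hpos : ∀ a b : ℝ, 0 ≤ a → b ≤ 1 → a < b → 0 < ν (Ioo a b)) :
    ∀ y z : ℝ, 0 ≤ y → z ≤ 1 → y < z → hh ν y < hh ν z := by
  intro y z hy hz hyz
  have h1 := hadd ν hfib y z hy hyz.le
  have h2 : hh ν z = hh ν y + (ν (Ioo y z)).toReal := by
    rw [hh, hh, h1, ENNReal.toReal_add (measure_ne_top ν _) (measure_ne_top ν _)]
  rw [h2]
  have := ENNReal.toReal_pos (hpos y z hy hz hyz).ne' (measure_ne_top ν _)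
  linarith

lemma ivt (hfib : ∀ y : ℝ, ν {y} = 0) (h1 : ν (Ioo 0 1) = 1) :
    ∀ u : ℝ, 0 ≤ u → u ≤ 1 → ∃ a, 0 ≤ a ∧ a ≤ 1 ∧ hh ν a = u := by
  intro u hu0 hu1
  have hh1 : hh ν 1 = 1 := by rw [hh, h1]; simp
  set S := {y : ℝ | y ∈ Icc (0:ℝ) 1 ∧ hh ν y ≤ u} with hS
  have h0S : (0:ℝ) ∈ S := ⟨⟨le_rfl, zero_le_one⟩, by rw [hh_zero]; exact hu0⟩
  have hbdd : BddAbove S := ⟨1, fun y hy => hy.1.2⟩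
  set a := sSup S with ha
  have haS : 0 ≤ a := le_csSup hbdd h0S
  have ha1 : a ≤ 1 := csSup_le ⟨0, h0S⟩ (fun y hy => hy.1.2)
  have hle : hh ν a ≤ u := by
    have hU : Ioo (0:ℝ) a = ⋃ k : ℕ, Ioo (0:ℝ) (a - 1/(k+1)) := by
      ext w
      simp only [mem_Ioo, mem_iUnion]
      constructor
      · rintro ⟨hw0, hwa⟩
        obtain ⟨k, hk⟩ := exists_nat_one_div_lt (show (0:ℝ) < a - w by linarith)
        exact ⟨k, hw0, by linarith⟩
      · rintro ⟨k, hw0, hwk⟩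
        have : (0:ℝ) < 1/(k+1) := by positivity
        exact ⟨hw0, by linarith⟩
    have hmon : Monotone (fun k : ℕ => Ioo (0:ℝ) (a - 1/(k+1))) := by
      intro k l hkl
      apply Ioo_subset_Ioo_right
      have h2 : (1:ℝ)/(l+1) ≤ 1/(k+1) := by
        apply one_div_le_one_div_of_le (by positivity)
        have : (k:ℝ) ≤ l := Nat.cast_le.mpr hkl
        linarith
      linarith
    have hHa : ν (Ioo 0 a) ≤ ENNReal.ofReal u := by
      rw [hU, hmon.measure_iUnion]
      apply iSup_le
      intro k
      have hlt' : a - 1/(k+1) < a := by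
        have : (0:ℝ) < 1/(k+1) := by positivity
        linarith
      obtain ⟨z, hzS, hz⟩ := exists_lt_of_lt_csSup ⟨0, h0S⟩ hlt'
      calc ν (Ioo 0 (a - 1/(k+1))) ≤ ν (Ioo 0 z) := measure_mono (Ioo_subset_Ioo_right hz.le)
        _ ≤ ENNReal.ofReal u :=
          (ENNReal.le_ofReal_iff_toReal_le (measure_ne_top ν _) hu0).mpr hzS.2
    exact ENNReal.toReal_le_of_le_ofReal hu0 hHa
  have hge : u ≤ hh ν a := by
    by_contra hcon
    push_neg at hcon
    have ha1' : a < 1 := by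
      rcases lt_or_eq_of_le ha1 with hc | hc
      · exact hc
      · rw [hc, hh1] at hcon; linarith
    set y : ℕ → ℝ := fun k => a + (1-a)/(k+2) with hy
    have hya : ∀ k, a < y k := by
      intro k
      have : (0:ℝ) < (1-a)/(k+2) := by
        apply div_pos (by linarith) (by positivity)
      simp only [hy]; linarith
    have hy1 : ∀ k, y k ≤ 1 := by
      intro k
      have h2 : (1-a)/((k:ℝ)+2) ≤ (1-a) := by
        apply div_le_self (by linarith)
        have : (0:ℝ) ≤ (k:ℝ) := Nat.cast_nonneg k
        linarith
      simp only [hy]; linarith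
    have hanti : Antitone (fun k : ℕ => Ioo (0:ℝ) (y k)) := by
      intro k l hkl
      apply Ioo_subset_Ioo_right
      simp only [hy]
      have hkl' : (k:ℝ) ≤ l := Nat.cast_le.mpr hkl
      have h2 : (1-a)/((l:ℝ)+2) ≤ (1-a)/((k:ℝ)+2) := by
        apply div_le_div_of_nonneg_left (by linarith) (by positivity) (by linarith)
      linarith
    have hI : ⋂ k, Ioo (0:ℝ) (y k) = Ioc (0:ℝ) a := by
      ext w
      simp only [mem_iInter, mem_Ioo, mem_Ioc]
      constructor
      · intro hw
        refine ⟨(hw 0).1, ?_⟩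
        by_contra hwa
        push_neg at hwa
        obtain ⟨k, hk⟩ := exists_nat_one_div_lt
          (show (0:ℝ) < (w - a)/(1-a) from div_pos (by linarith) (by linarith))
        have h3 : (1-a) * (1/((k:ℝ)+1)) < (1-a) * ((w-a)/(1-a)) :=
          mul_lt_mul_of_pos_left hk (by linarith)
        rw [mul_div_cancel₀ _ (by linarith : (1:ℝ)-a ≠ 0)] at h3
        have h4 : (1-a)/((k:ℝ)+2) ≤ (1-a)/((k:ℝ)+1) := by
          apply div_le_div_of_nonneg_left (by linarith) (by positivity) (by linarith)
        have h5 := (hw k).2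
        simp only [hy] at h5
        have h6 : (1-a) * (1/((k:ℝ)+1)) = (1-a)/((k:ℝ)+1) := by ring
        linarith
      · intro hw k
        exact ⟨hw.1, lt_of_le_of_lt hw.2 (hya k)⟩
    have hiInf : ν (Ioc (0:ℝ) a) = ⨅ k, ν (Ioo (0:ℝ) (y k)) := by
      rw [← hI]
      exact hanti.measure_iInter (fun k => measurableSet_Ioo.nullMeasurableSet)
        ⟨0, measure_ne_top ν _⟩
    have hIoc : ν (Ioc (0:ℝ) a) = ν (Ioo 0 a) := by
      rw [← Ioc_sdiff_right, measure_diff_null (hfib a)]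
    have hlt2 : ⨅ k, ν (Ioo (0:ℝ) (y k)) < ENNReal.ofReal u := by
      rw [← hiInf, hIoc]
      exact (ENNReal.lt_ofReal_iff_toReal_lt (measure_ne_top ν _)).mpr hcon
    obtain ⟨k, hk⟩ := iInf_lt_iff.mp hlt2
    have hykS : y k ∈ S := by
      refine ⟨⟨by linarith [hya k], hy1 k⟩, ?_⟩
      exact ENNReal.toReal_le_of_le_ofReal hu0 hk.le
    exact absurd (le_csSup hbdd hykS) (not_le.mpr (hya k))
  exact ⟨a, haS, ha1, le_antisymm hle hge⟩

end Stmt6Aux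
theorem stmt6_outer_composition_measure_preserving
    (F : ℝ → ℝ) (hmaps : MapsTo F (Ico (0:ℝ) 1) (Ico (0:ℝ) 1))
    (hsurj : SurjOn F (Ico (0:ℝ) 1) (Ico (0:ℝ) 1))
    (n : ℕ) (hn : 0 < n) (t : ℕ → ℝ) (ht0 : t 0 = 0) (htn : t n = 1)
    (htmono : StrictMonoOn t (Iic n))
    (haff : ∀ i < n, ∃ c s : ℝ, s ≠ 0 ∧
      ∀ x ∈ Ico (t i) (t (i + 1)), F x = c + s * x)
    (h : ℝ → ℝ) (hh0 : h 0 = 0)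
    (hhdef : ∀ x ∈ Ioc (0:ℝ) 1,
      h x = (volume (Ico (0:ℝ) 1 ∩ F ⁻¹' (Ioo (0:ℝ) x))).toReal) :
    ∀ A : Set ℝ, A ⊆ Ico (0:ℝ) 1 → MeasurableSet A →
      volume (Ico (0:ℝ) 1 ∩ (h ∘ F) ⁻¹' A) = volume A := by
  classical
  choose! c s hs0 hFaff using haff
  have htle : ∀ {i j : ℕ}, i ≤ j → j ≤ n → t i ≤ t j := by
    intro i j hij hj
    rcases eq_or_lt_of_le hij with rfl | hlt
    · exact le_rfl
    · exact (htmono (mem_Iic.mpr (hij.trans hj)) (mem_Iic.mpr hj) hlt).le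
  -- every point of [0,1) lies in a unique affine piece
  have hpiece : ∀ x ∈ Ico (0:ℝ) 1, ∃ i, i < n ∧ x ∈ Ico (t i) (t (i+1)) := by
    intro x hx
    set i := Nat.findGreatest (fun i => t i ≤ x) n with hidef
    have h00 : t 0 ≤ x := by rw [ht0]; exact hx.1
    have hspec : t i ≤ x := Nat.findGreatest_spec (P := fun i => t i ≤ x) (Nat.zero_le n) h00
    have hilen : i ≤ n := Nat.findGreatest_le n
    have hin : i < n := by
      rcases lt_or_eq_of_le hilen with hc | hc
      · exact hc
      · rw [hc] at hspec; rw [htn] at hspec; exact absurd hspec (not_le.mpr hx.2)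
    refine ⟨i, hin, hspec, ?_⟩
    by_contra hcon
    push_neg at hcon
    exact Nat.findGreatest_is_greatest (Nat.lt_succ_self i) (Nat.succ_le_of_lt hin) hcon
  set F' : ℝ → ℝ :=
    fun x => ∑ i ∈ Finset.range n, (Ico (t i) (t (i+1))).indicator (fun y => c i + s i * y) x
    with hF'def
  have hF'eq : ∀ x ∈ Ico (0:ℝ) 1, F' x = F x := by
    intro x hx
    obtain ⟨i, hin, hxi⟩ := hpiece x hx
    simp only [hF'def]
    rw [Finset.sum_eq_single i]
    · rw [indicator_of_mem hxi]
      exact (hFaff i hin x hxi).symm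
    · intro j hj hji
      apply indicator_of_notMem
      intro hxj
      rcases lt_or_gt_of_ne hji with hlt | hgt
      · have := htle (Nat.succ_le_of_lt hlt) hin.le
        have h2 := hxj.2
        have h3 := hxi.1
        linarith
      · have := htle (Nat.succ_le_of_lt hgt) (Finset.mem_range.mp hj).le
        have h2 := hxi.2
        have h3 := hxj.1
        linarith
    · intro hni
      exact absurd (Finset.mem_range.mpr hin) hni
  have hF'meas : Measurable F' := by
    rw [hF'def]
    apply Finset.measurable_sum
    intro i _
    exact (measurable_const.add (measurable_id.const_mul (s i))).indicator measurableSet_Ico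
  set ν : Measure ℝ := Measure.map F' (volume.restrict (Ico (0:ℝ) 1)) with hνdef
  have hν : ∀ B : Set ℝ, MeasurableSet B → ν B = volume (Ico (0:ℝ) 1 ∩ F ⁻¹' B) := by
    intro B hB
    rw [hνdef, Measure.map_apply hF'meas hB, Measure.restrict_apply (hF'meas hB)]
    congr 1
    ext x
    simp only [mem_inter_iff, mem_preimage]
    constructor
    · rintro ⟨hxB, hx⟩; exact ⟨hx, by rwa [← hF'eq x hx]⟩
    · rintro ⟨hx, hxB⟩; exact ⟨by rwa [hF'eq x hx], hx⟩
  have hνuniv : ν univ = 1 := by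
    rw [hν univ MeasurableSet.univ]
    simp [Real.volume_Ico]
  haveI : IsFiniteMeasure ν := ⟨by rw [hνuniv]; exact ENNReal.one_lt_top⟩
  -- fibers of F are finite, hence null
  have hfib : ∀ y : ℝ, ν {y} = 0 := by
    intro y
    rw [hν _ (measurableSet_singleton y)]
    apply measure_mono_null (t := ⋃ i ∈ Finset.range n, {((y - c i) / s i : ℝ)})
    · rintro x ⟨hx, hxy⟩
      obtain ⟨i, hin, hxi⟩ := hpiece x hx
      have hFx := hFaff i hin x hxi
      simp only [mem_preimage, mem_singleton_iff] at hxy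
      apply mem_biUnion (Finset.mem_range.mpr hin)
      simp only [mem_singleton_iff]
      rw [eq_div_iff (hs0 i hin)]
      rw [hxy] at hFx
      linarith [hFx]
    · exact (Set.Finite.biUnion (Finset.range n).finite_toSet
        (fun i _ => finite_singleton _)).measure_zero volume
  -- positivity on subintervals of [0,1]
  have hpos : ∀ a b : ℝ, 0 ≤ a → b ≤ 1 → a < b → 0 < ν (Ioo a b) := by
    intro a b ha hb hab
    rw [hν _ measurableSet_Ioo]
    have hw : (a+b)/2 ∈ Ico (0:ℝ) 1 := ⟨by linarith, by linarith⟩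
    obtain ⟨x, hx, hFx⟩ := hsurj hw
    obtain ⟨i, hin, hxi⟩ := hpiece x hx
    set w : ℝ := (a+b)/2 with hwdef
    set ε : ℝ := (b - a) / 2 with hεdef
    have hε0 : 0 < ε := by rw [hεdef]; linarith
    have hsne : s i ≠ 0 := hs0 i hin
    set δ : ℝ := min (t (i+1) - x) (ε / |s i|) with hδdef
    have hδ0 : 0 < δ :=
      lt_min (by linarith [hxi.2]) (div_pos hε0 (abs_pos.mpr hsne))
    have hti1 : t (i+1) ≤ 1 := htn ▸ htle (Nat.succ_le_of_lt hin) le_rfl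
    have hsub : Ico x (x + δ) ⊆ Ico (0:ℝ) 1 ∩ F ⁻¹' (Ioo a b) := by
      intro z hz
      have hzd : z - x < δ := by linarith [hz.2]
      have hz1 : z < t (i+1) := by
        have := min_le_left (t (i+1) - x) (ε / |s i|)
        rw [← hδdef] at this
        linarith [hz.2]
      have hzpiece : z ∈ Ico (t i) (t (i+1)) := ⟨le_trans hxi.1 hz.1, hz1⟩
      have hz01 : z ∈ Ico (0:ℝ) 1 := ⟨le_trans hx.1 hz.1, lt_of_lt_of_le hz1 hti1⟩
      refine ⟨hz01, ?_⟩
      have hFz : F z = c i + s i * z := hFaff i hin z hzpiece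
      have hFxw : w = c i + s i * x := by rw [← hFx]; exact hFaff i hin x hxi
      have h1 : F z - w = s i * (z - x) := by rw [hFz, hFxw]; ring
      have h2 : |F z - w| = |s i| * (z - x) := by
        rw [h1, abs_mul, abs_of_nonneg (show (0:ℝ) ≤ z - x by linarith [hz.1])]
      have h3 : z - x < ε / |s i| := lt_of_lt_of_le hzd (min_le_right _ _)
      have h4 : |F z - w| < ε := by
        rw [h2]
        calc |s i| * (z - x) < |s i| * (ε / |s i|) :=
              mul_lt_mul_of_pos_left h3 (abs_pos.mpr hsne)
          _ = ε := by field_simp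
      rw [abs_lt] at h4
      simp only [mem_preimage, mem_Ioo]
      rw [hwdef, hεdef] at h4
      exact ⟨by linarith [h4.1], by linarith [h4.2]⟩
    calc (0:ℝ≥0∞) < ENNReal.ofReal δ := ENNReal.ofReal_pos.mpr hδ0
      _ = volume (Ico x (x + δ)) := by rw [Real.volume_Ico]; congr 1; ring
      _ ≤ volume (Ico (0:ℝ) 1 ∩ F ⁻¹' (Ioo a b)) := measure_mono hsub
  -- total mass on (0,1)
  have hν01 : ν (Ioo (0:ℝ) 1) = 1 := by
    refine le_antisymm (by rw [← hνuniv]; exact measure_mono (subset_univ _)) ?_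
    have hcover : Ico (0:ℝ) 1 ⊆
        (Ico (0:ℝ) 1 ∩ F ⁻¹' (Ioo 0 1)) ∪ (Ico (0:ℝ) 1 ∩ F ⁻¹' {0}) := by
      intro x hx
      rcases eq_or_lt_of_le (hmaps hx).1 with he | h0
      · right; exact ⟨hx, by simp [mem_preimage, ← he]⟩
      · left; exact ⟨hx, ⟨h0, (hmaps hx).2⟩⟩
    calc (1:ℝ≥0∞) = volume (Ico (0:ℝ) 1) := by simp [Real.volume_Ico]
      _ ≤ volume (Ico (0:ℝ) 1 ∩ F ⁻¹' (Ioo 0 1)) + volume (Ico (0:ℝ) 1 ∩ F ⁻¹' {0}) :=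
          le_trans (measure_mono hcover) (measure_union_le _ _)
      _ = ν (Ioo (0:ℝ) 1) + ν {0} := by
          rw [hν _ measurableSet_Ioo, hν _ (measurableSet_singleton 0)]
      _ = ν (Ioo (0:ℝ) 1) := by rw [hfib 0, add_zero]
  have hhlt : ∀ y z : ℝ, 0 ≤ y → z ≤ 1 → y < z → Stmt6Aux.hh ν y < Stmt6Aux.hh ν z :=
    Stmt6Aux.hh_lt ν hfib hpos
  have hh1 : Stmt6Aux.hh ν 1 = 1 := by rw [Stmt6Aux.hh_def', hν01]; simp
  have hIVT := Stmt6Aux.ivt ν hfib hν01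
  have hhlt1 : ∀ y : ℝ, 0 ≤ y → y < 1 → Stmt6Aux.hh ν y < 1 := fun y hy hy1 => by
    rw [← hh1]; exact hhlt y 1 hy le_rfl hy1
  set g : ℝ → ℝ := fun x => Stmt6Aux.hh ν (F' x) with hgdef
  have hgmeas : Measurable g := (Stmt6Aux.hh_mono ν).measurable.comp hF'meas
  set ν₂ : Measure ℝ := Measure.map g (volume.restrict (Ico (0:ℝ) 1)) with hν₂def
  have hν₂ : ∀ B : Set ℝ, MeasurableSet B → ν₂ B = volume (g ⁻¹' B ∩ Ico (0:ℝ) 1) := by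
    intro B hB
    rw [hν₂def, Measure.map_apply hgmeas hB, Measure.restrict_apply (hgmeas hB)]
  haveI : IsFiniteMeasure ν₂ := by
    constructor
    rw [hν₂ univ MeasurableSet.univ, preimage_univ, univ_inter, Real.volume_Ico]
    exact ENNReal.ofReal_lt_top
  have hgx : ∀ x ∈ Ico (0:ℝ) 1, g x = Stmt6Aux.hh ν (F x) := by
    intro x hx
    simp only [hgdef]
    rw [hF'eq x hx]
  -- the key interval computation
  have hmain : ∀ u v : ℝ, ν₂ (Ioo u v) = volume (Ioo u v ∩ Ico (0:ℝ) 1) := by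
    intro u v
    rw [hν₂ _ measurableSet_Ioo]
    rcases le_or_gt v u with hvu | huv
    · rw [Ioo_eq_empty (not_lt.mpr hvu)]; simp
    rcases le_or_gt v 0 with hv0 | hv0
    · have h1 : g ⁻¹' (Ioo u v) ∩ Ico (0:ℝ) 1 = ∅ := by
        apply eq_empty_of_forall_notMem
        rintro x ⟨hxg, hx⟩
        simp only [mem_preimage, mem_Ioo] at hxg
        rw [hgx x hx] at hxg
        have := Stmt6Aux.hh_nonneg ν (F x)
        linarith [hxg.2]
      have h2 : Ioo u v ∩ Ico (0:ℝ) 1 = ∅ := by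
        apply eq_empty_of_forall_notMem
        rintro x ⟨hx1, hx2⟩
        exact absurd (lt_of_lt_of_le hx1.2 hv0) (not_lt.mpr hx2.1)
      rw [h1, h2]
    rcases le_or_gt 1 u with hu1 | hu1
    · have h1 : g ⁻¹' (Ioo u v) ∩ Ico (0:ℝ) 1 = ∅ := by
        apply eq_empty_of_forall_notMem
        rintro x ⟨hxg, hx⟩
        simp only [mem_preimage, mem_Ioo] at hxg
        rw [hgx x hx] at hxg
        have h2 := hhlt1 (F x) (hmaps hx).1 (hmaps hx).2
        linarith [hxg.1]
      have h2 : Ioo u v ∩ Ico (0:ℝ) 1 = ∅ := by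
        apply eq_empty_of_forall_notMem
        rintro x ⟨hx1, hx2⟩
        linarith [hx1.1, hx2.2]
      rw [h1, h2]
    -- now 0 < v, u < 1, u < v
    set v' := min v 1 with hv'def
    have hv'0 : 0 < v' := lt_min hv0 one_pos
    have hv'1 : v' ≤ 1 := min_le_right _ _
    obtain ⟨b, hb0, hb1, hhb⟩ := hIVT v' hv'0.le hv'1
    rcases lt_or_ge u 0 with hu0 | hu0
    · -- u < 0
      have hset : g ⁻¹' (Ioo u v) ∩ Ico (0:ℝ) 1 = F ⁻¹' (Iio b) ∩ Ico (0:ℝ) 1 := by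
        ext x
        simp only [mem_inter_iff, mem_preimage, mem_Ioo, mem_Iio]
        constructor
        · rintro ⟨⟨hgu, hgv⟩, hx⟩
          refine ⟨?_, hx⟩
          rw [hgx x hx] at hgv
          have h5 : Stmt6Aux.hh ν (F x) < Stmt6Aux.hh ν b := by
            rw [hhb]
            exact lt_min hgv (hhlt1 (F x) (hmaps hx).1 (hmaps hx).2)
          by_contra hctr
          push_neg at hctr
          exact absurd (Stmt6Aux.hh_mono ν hctr) (not_le.mpr h5)
        · rintro ⟨hFb, hx⟩
          refine ⟨⟨?_, ?_⟩, hx⟩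
          · rw [hgx x hx]
            exact lt_of_lt_of_le hu0 (Stmt6Aux.hh_nonneg ν (F x))
          · rw [hgx x hx]
            have h6 : Stmt6Aux.hh ν (F x) < Stmt6Aux.hh ν b :=
              hhlt (F x) b (hmaps hx).1 hb1 hFb
            rw [hhb] at h6
            exact lt_of_lt_of_le h6 (min_le_left _ _)
      rw [hset]
      have h7 : volume (F ⁻¹' (Iio b) ∩ Ico (0:ℝ) 1) = ν (Iio b) := by
        rw [hν _ measurableSet_Iio, inter_comm]
      have hbpos : 0 < b := by
        rcases eq_or_lt_of_le hb0 with hbe | hbe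
        · exfalso; rw [← hbe, Stmt6Aux.hh_zero] at hhb; linarith
        · exact hbe
      have hIio : ν (Iio b) = ν (Ioo 0 b) := by
        have hsplit : Iio b = Iic (0:ℝ) ∪ Ioo 0 b := by
          ext z
          simp only [mem_Iio, mem_union, mem_Iic, mem_Ioo]
          constructor
          · intro hz
            rcases le_or_gt z 0 with h' | h'
            · exact Or.inl h'
            · exact Or.inr ⟨h', hz⟩
          · rintro (h' | h')
            · exact lt_of_le_of_lt h' hbpos
            · exact h'.2
        have hIic : ν (Iic (0:ℝ)) = 0 := by
          rw [hν _ measurableSet_Iic]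
          apply measure_mono_null (t := Ico (0:ℝ) 1 ∩ F ⁻¹' {0})
          · rintro z ⟨hz, hz0⟩
            exact ⟨hz, le_antisymm hz0 (hmaps hz).1⟩
          · rw [← hν _ (measurableSet_singleton 0)]
            exact hfib 0
        rw [hsplit]
        refine le_antisymm ?_ (measure_mono subset_union_right)
        calc ν (Iic 0 ∪ Ioo 0 b) ≤ ν (Iic 0) + ν (Ioo 0 b) := measure_union_le _ _
          _ = ν (Ioo 0 b) := by rw [hIic, zero_add]
      have hrhs : Ioo u v ∩ Ico (0:ℝ) 1 = Ico 0 v' := by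
        ext z
        simp only [mem_inter_iff, mem_Ioo, mem_Ico, hv'def, lt_min_iff]
        constructor
        · rintro ⟨⟨_, hz2⟩, hz3, hz4⟩; exact ⟨hz3, hz2, hz4⟩
        · rintro ⟨hz1, hz2, hz3⟩; exact ⟨⟨lt_of_lt_of_le hu0 hz1, hz2⟩, hz1, hz3⟩
      rw [h7, hIio, hrhs, Real.volume_Ico, sub_zero, ← hhb]
      exact (Stmt6Aux.ofReal_hh ν b).symm
    · -- 0 ≤ u
      obtain ⟨a, ha0, ha1, hha⟩ := hIVT u hu0 hu1.le
      have huv' : u < v' := lt_min huv hu1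
      have hab : a < b := by
        by_contra hc
        push_neg at hc
        have := Stmt6Aux.hh_mono ν hc
        rw [hha, hhb] at this
        linarith
      have hset : g ⁻¹' (Ioo u v) ∩ Ico (0:ℝ) 1 = F ⁻¹' (Ioo a b) ∩ Ico (0:ℝ) 1 := by
        ext x
        simp only [mem_inter_iff, mem_preimage, mem_Ioo]
        constructor
        · rintro ⟨⟨hgu, hgv⟩, hx⟩
          rw [hgx x hx] at hgu hgv
          refine ⟨⟨?_, ?_⟩, hx⟩
          · by_contra hctr
            push_neg at hctr
            have := Stmt6Aux.hh_mono ν hctr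
            rw [hha] at this
            linarith
          · by_contra hctr
            push_neg at hctr
            have h9 := Stmt6Aux.hh_mono ν hctr
            rw [hhb] at h9
            have h8 := hhlt1 (F x) (hmaps hx).1 (hmaps hx).2
            rw [hv'def] at h9
            rcases le_or_gt v 1 with hc1 | hc1
            · rw [min_eq_left hc1] at h9; linarith
            · rw [min_eq_right hc1.le] at h9; linarith
        · rintro ⟨⟨haF, hFb⟩, hx⟩
          refine ⟨⟨?_, ?_⟩, hx⟩
          · rw [hgx x hx, ← hha]
            exact hhlt a (F x) ha0 (hmaps hx).2.le haF
          · rw [hgx x hx]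
            have h6 : Stmt6Aux.hh ν (F x) < Stmt6Aux.hh ν b :=
              hhlt (F x) b (hmaps hx).1 hb1 hFb
            rw [hhb] at h6
            exact lt_of_lt_of_le h6 (min_le_left _ _)
      rw [hset]
      have h7 : volume (F ⁻¹' (Ioo a b) ∩ Ico (0:ℝ) 1) = ν (Ioo a b) := by
        rw [hν _ measurableSet_Ioo, inter_comm]
      have hrhs : Ioo u v ∩ Ico (0:ℝ) 1 = Ioo u v' := by
        ext z
        simp only [mem_inter_iff, mem_Ioo, mem_Ico, hv'def, lt_min_iff]
        constructor
        · rintro ⟨⟨hz1, hz2⟩, _, hz4⟩; exact ⟨hz1, hz2, hz4⟩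
        · rintro ⟨hz1, hz2, hz3⟩; exact ⟨⟨hz1, hz2⟩, le_trans hu0 hz1.le, hz3⟩
      rw [h7, hrhs, Real.volume_Ioo]
      have hadd' := Stmt6Aux.hadd ν hfib a b ha0 hab.le
      have hHa : ν (Ioo 0 a) = ENNReal.ofReal u := by
        rw [← hha]
        exact (Stmt6Aux.ofReal_hh ν a).symm
      have hHb : ν (Ioo 0 b) = ENNReal.ofReal v' := by
        rw [← hhb]
        exact (Stmt6Aux.ofReal_hh ν b).symm
      have h8 : ν (Ioo 0 a) + ν (Ioo a b) = ν (Ioo 0 a) + ENNReal.ofReal (v' - u) := by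
        rw [← hadd', hHb, hHa]
        rw [← ENNReal.ofReal_add hu0 (by linarith : (0:ℝ) ≤ v' - u)]
        congr 1
        ring
      exact (ENNReal.add_right_inj (measure_ne_top ν _)).mp h8
  -- conclude by the pi-system uniqueness of measures
  have hext : ν₂ = volume.restrict (Ico (0:ℝ) 1) := by
    apply Real.measure_ext_Ioo_rat
    intro p q
    rw [hmain, Measure.restrict_apply measurableSet_Ioo]
  intro A hA hAmeas
  have hpt : ∀ x ∈ Ico (0:ℝ) 1, h (F x) = g x := by
    intro x hx
    rw [hgx x hx]
    rcases eq_or_lt_of_le (hmaps hx).1 with he | hFpos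
    · rw [← he, hh0, Stmt6Aux.hh_zero]
    · rw [hhdef (F x) ⟨hFpos, (hmaps hx).2.le⟩, ← hν _ measurableSet_Ioo,
        Stmt6Aux.hh_def']
  have hseteq : Ico (0:ℝ) 1 ∩ (h ∘ F) ⁻¹' A = g ⁻¹' A ∩ Ico (0:ℝ) 1 := by
    ext x
    simp only [mem_inter_iff, mem_preimage, Function.comp_apply]
    constructor
    · rintro ⟨hx, hxa⟩
      exact ⟨by rw [← hpt x hx]; exact hxa, hx⟩
    · rintro ⟨hxa, hx⟩
      exact ⟨hx, by rw [hpt x hx]; exact hxa⟩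
  calc volume (Ico (0:ℝ) 1 ∩ (h ∘ F) ⁻¹' A) = ν₂ A := by rw [hseteq, ← hν₂ A hAmeas]
    _ = volume (A ∩ Ico (0:ℝ) 1) := by rw [hext, Measure.restrict_apply hAmeas]
    _ = volume A := by rw [inter_eq_self_of_subset_left hA]
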